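/- arXiv:1405.4297 — 2 statements merged into one kernel-verified Lean document; each statement's English description precedes it below -/
import Mathlib

section
/- Let X, Y ⊆ D be disjoint with X <₁ Y, and suppose g : D → D preserves <₁ on X, and the type of (g(x), g(y)) depends only on the type of (x, y) for x ∈ X, y ∈ Y (canonicity between X and Y). Assume further that for all x ∈ X, y ∈ Y with up(x,y), there exists z ∈ X with x <₁ z and dow(z,y). If there exist x ∈ X, y ∈ Y with up(x,y) and g(y) <₁ g(x), then g reverses <₁ between X and Y: for all x ∈ X, y ∈ Y, g(y) <₁ g(x). -/
def up {D : Type*} (r₁ r₂ : D → D → Prop) (a b : D) : Prop := r₁ a b ∧ r₂ a b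

def dow {D : Type*} (r₁ r₂ : D → D → Prop) (a b : D) : Prop := r₁ a b ∧ r₂ b a

def sameType {D : Type*} (r₁ r₂ : D → D → Prop) (a b c d : D) : Prop :=
  (up r₁ r₂ a b ↔ up r₁ r₂ c d) ∧ (dow r₁ r₂ a b ↔ dow r₁ r₂ c d) ∧
  (up r₁ r₂ b a ↔ up r₁ r₂ d c) ∧ (dow r₁ r₂ b a ↔ dow r₁ r₂ d c)

-- helper: transfer r₁ across sameType
lemma sameType_trans_r₁ {D : Type*} {r₁ r₂ : D → D → Prop}
    [IsStrictTotalOrder D r₁] [IsStrictTotalOrder D r₂]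
    {a b c d : D} (h : sameType r₁ r₂ a b c d) (hab : r₁ a b) : r₁ c d := by
  have hne : a ≠ b := fun e => (irrefl_of r₁ b) (e ▸ hab)
  rcases trichotomous_of r₂ a b with h2 | h2 | h2
  · exact (h.1.mp ⟨hab, h2⟩).1
  · exact absurd h2 hne
  · exact (h.2.1.mp ⟨hab, h2⟩).1

lemma up_sameType {D : Type*} {r₁ r₂ : D → D → Prop}
    [IsStrictTotalOrder D r₁] [IsStrictTotalOrder D r₂]
    {x y x' y' : D} (h : up r₁ r₂ x y) (h' : up r₁ r₂ x' y') :
    sameType r₁ r₂ x y x' y' := by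
  refine ⟨⟨fun _ => h', fun _ => h⟩, ?_, ?_, ?_⟩
  · constructor
    · rintro ⟨_, h2⟩; exact absurd h.2 (asymm_of r₂ h2)
    · rintro ⟨_, h2⟩; exact absurd h'.2 (asymm_of r₂ h2)
  · constructor
    · rintro ⟨h1, _⟩; exact absurd h.1 (asymm_of r₁ h1)
    · rintro ⟨h1, _⟩; exact absurd h'.1 (asymm_of r₁ h1)
  · constructor
    · rintro ⟨h1, _⟩; exact absurd h.1 (asymm_of r₁ h1)
    · rintro ⟨h1, _⟩; exact absurd h'.1 (asymm_of r₁ h1)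

lemma dow_sameType {D : Type*} {r₁ r₂ : D → D → Prop}
    [IsStrictTotalOrder D r₁] [IsStrictTotalOrder D r₂]
    {x y x' y' : D} (h : dow r₁ r₂ x y) (h' : dow r₁ r₂ x' y') :
    sameType r₁ r₂ x y x' y' := by
  refine ⟨?_, ⟨fun _ => h', fun _ => h⟩, ?_, ?_⟩
  · constructor
    · rintro ⟨_, h2⟩; exact absurd h.2 (asymm_of r₂ h2)
    · rintro ⟨_, h2⟩; exact absurd h'.2 (asymm_of r₂ h2)
  · constructor
    · rintro ⟨h1, _⟩; exact absurd h.1 (asymm_of r₁ h1)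
    · rintro ⟨h1, _⟩; exact absurd h'.1 (asymm_of r₁ h1)
  · constructor
    · rintro ⟨h1, _⟩; exact absurd h.1 (asymm_of r₁ h1)
    · rintro ⟨h1, _⟩; exact absurd h'.1 (asymm_of r₁ h1)

theorem stmt_7 {D : Type*} (r₁ r₂ : D → D → Prop)
    [IsStrictTotalOrder D r₁] [IsStrictTotalOrder D r₂]
    (X Y : Set D) (hdisj : Disjoint X Y) (g : D → D)
    (hXY : ∀ x ∈ X, ∀ y ∈ Y, r₁ x y)
    (hpres : ∀ x ∈ X, ∀ x' ∈ X, r₁ x x' → r₁ (g x) (g x'))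
    (hcan : ∀ x ∈ X, ∀ y ∈ Y, ∀ x' ∈ X, ∀ y' ∈ Y,
      sameType r₁ r₂ x y x' y' → sameType r₁ r₂ (g x) (g y) (g x') (g y'))
    (hdense : ∀ x ∈ X, ∀ y ∈ Y, up r₁ r₂ x y →
      ∃ z ∈ X, r₁ x z ∧ dow r₁ r₂ z y)
    (hwit : ∃ x ∈ X, ∃ y ∈ Y, up r₁ r₂ x y ∧ r₁ (g y) (g x)) :
    ∀ x ∈ X, ∀ y ∈ Y, r₁ (g y) (g x) := by
  obtain ⟨x₀, hx₀, y₀, hy₀, hup₀, hg₀⟩ := hwit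
  intro x hx y hy
  have hxy : r₁ x y := hXY x hx y hy
  have hne : x ≠ y := fun e => (irrefl_of r₁ y) (e ▸ hxy)
  rcases trichotomous_of r₂ x y with h2 | h2 | h2
  · -- up case
    have hst := hcan x hx y hy x₀ hx₀ y₀ hy₀ (up_sameType ⟨hxy, h2⟩ hup₀)
    have : sameType r₁ r₂ (g y) (g x) (g y₀) (g x₀) :=
      ⟨hst.2.2.1, hst.2.2.2, hst.1, hst.2.1⟩
    exact sameType_trans_r₁ ⟨this.1.symm, this.2.1.symm, this.2.2.1.symm, this.2.2.2.symm⟩ hg₀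
  · exact absurd h2 hne
  · -- dow case
    obtain ⟨z, hz, hxz, hdz⟩ := hdense x₀ hx₀ y₀ hy₀ hup₀
    have hgz : r₁ (g x₀) (g z) := hpres x₀ hx₀ z hz hxz
    have hgy₀z : r₁ (g y₀) (g z) := trans_of r₁ hg₀ hgz
    have hst := hcan z hz y₀ hy₀ x hx y hy (dow_sameType hdz ⟨hxy, h2⟩)
    -- transfer r₁ (g y₀) (g z) to r₁ (g y) (g x)
    have : sameType r₁ r₂ (g y₀) (g z) (g y) (g x) :=
      ⟨hst.2.2.1, hst.2.2.2, hst.1, hst.2.1⟩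
    exact sameType_trans_r₁ this hgy₀z
end

section
/- Let X₀, …, Xₙ be pairwise disjoint nonempty subsets of a set D with strict linear order <₁ such that Xᵢ <₁ Xⱼ whenever i < j. Suppose g : D → D is such that for all i < j < k, the images satisfy the cyclic condition cyc(g[Xᵢ], g[Xⱼ], g[Xₖ]) (meaning g[Xᵢ] <₁ g[Xⱼ] <₁ g[Xₖ], or g[Xⱼ] <₁ g[Xₖ] <₁ g[Xᵢ], or g[Xₖ] <₁ g[Xᵢ] <₁ g[Xⱼ]), and suppose g reverses <₁ between Xⱼ and Xⱼ₊₁ for some fixed j (i.e., g[Xⱼ₊₁] <₁ g[Xⱼ]). Then g[Xⱼ₊₁] <₁ g[Xⱼ₊₂] <₁ ⋯ <₁ g[Xₙ] <₁ g[X₀] <₁ ⋯ <₁ g[Xⱼ]. -/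
/-- S <₁ T for sets: every element of S is r₁-below every element of T. -/
def setLt {D : Type*} (r₁ : D → D → Prop) (S T : Set D) : Prop :=
  ∀ s ∈ S, ∀ t ∈ T, r₁ s t

/-- cyc(A,B,C): one of A <₁ B <₁ C, B <₁ C <₁ A, C <₁ A <₁ B holds. -/
def cyc {D : Type*} (r₁ : D → D → Prop) (A B C : Set D) : Prop :=
  (setLt r₁ A B ∧ setLt r₁ B C) ∨ (setLt r₁ B C ∧ setLt r₁ C A) ∨
  (setLt r₁ C A ∧ setLt r₁ A B)

theorem stmt_16 {D : Type*} (r₁ : D → D → Prop) [IsStrictTotalOrder D r₁]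
    {n : ℕ} (X : ℕ → Set D)
    (hne : ∀ i ≤ n, (X i).Nonempty)
    (hdisj : ∀ i ≤ n, ∀ j ≤ n, i ≠ j → Disjoint (X i) (X j))
    (horder : ∀ i j, i < j → j ≤ n → setLt r₁ (X i) (X j))
    (g : D → D)
    (hcyc : ∀ i j k, i < j → j < k → k ≤ n →
      cyc r₁ (g '' X i) (g '' X j) (g '' X k))
    (j : ℕ) (hj : j + 1 ≤ n)
    (hrev : setLt r₁ (g '' X (j + 1)) (g '' X j)) :
    ∀ p ≤ n, ∀ q ≤ n,
      (if j + 1 ≤ p then p - (j + 1) else p + (n - j)) <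
        (if j + 1 ≤ q then q - (j + 1) else q + (n - j)) →
      setLt r₁ (g '' X p) (g '' X q) := by
  set L : ℕ → ℕ → Prop := fun a b => setLt r₁ (g '' X a) (g '' X b) with hLdef
  have hjn : j ≤ n := Nat.le_of_succ_le hj
  have hne' : ∀ i ≤ n, (g '' X i).Nonempty := fun i hi => (hne i hi).image g
  have asym : ∀ a, a ≤ n → ∀ b, b ≤ n → L a b → L b a → False := by
    intro a ha b hb hab hba
    obtain ⟨s, hs⟩ := hne' a ha
    obtain ⟨t, ht⟩ := hne' b hb
    exact irrefl_of r₁ s (trans_of r₁ (hab s hs t ht) (hba t ht s hs))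
  have hrev' : L (j + 1) j := hrev
  -- (a) for i < j : L (j+1) i ∧ L i j
  have ha : ∀ i, i < j → L (j + 1) i ∧ L i j := by
    intro i hi
    rcases hcyc i j (j + 1) hi (Nat.lt_succ_self j) hj with ⟨h1, h2⟩ | ⟨h1, h2⟩ | ⟨h1, h2⟩
    · exact absurd hrev' (fun h => asym j hjn (j + 1) hj h2 h)
    · exact absurd hrev' (fun h => asym j hjn (j + 1) hj h1 h)
    · exact ⟨h1, h2⟩
  -- (b) for j+1 < k ≤ n : L (j+1) k ∧ L k j
  have hb : ∀ k, j + 1 < k → k ≤ n → L (j + 1) k ∧ L k j := by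
    intro k hk hkn
    rcases hcyc j (j + 1) k (Nat.lt_succ_self j) hk hkn with ⟨h1, h2⟩ | ⟨h1, h2⟩ | ⟨h1, h2⟩
    · exact absurd hrev' (fun h => asym j hjn (j + 1) hj h1 h)
    · exact ⟨h1, h2⟩
    · exact absurd hrev' (fun h => asym j hjn (j + 1) hj h2 h)
  have hkj : ∀ k, j < k → k ≤ n → L k j := by
    intro k hk hkn
    rcases eq_or_lt_of_le (Nat.succ_le_of_lt hk) with h | h
    · rw [← h]; exact hrev'
    · exact (hb k h hkn).2
  -- (c) for i ≤ j < k ≤ n : L k i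
  have hc : ∀ i, i ≤ j → ∀ k, j < k → k ≤ n → L k i := by
    intro i hi k hk hkn
    rcases eq_or_lt_of_le hi with h | h
    · rw [h]; exact hkj k hk hkn
    · rcases hcyc i j k h hk hkn with ⟨h1, h2⟩ | ⟨h1, h2⟩ | ⟨h1, h2⟩
      · exact absurd (hkj k hk hkn) (fun hh => asym j hjn k hkn h2 hh)
      · exact absurd (hkj k hk hkn) (fun hh => asym j hjn k hkn h1 hh)
      · exact h1
  -- (d) for i < k ≤ j : L i k
  have hd : ∀ i k, i < k → k ≤ j → L i k := by
    intro i k hik hkj'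
    rcases eq_or_lt_of_le hkj' with h | h
    · rw [h]; exact (ha i (h ▸ hik)).2
    · have hij : L i j := (ha i (lt_trans hik h)).2
      rcases hcyc i k j hik h hjn with ⟨h1, h2⟩ | ⟨h1, h2⟩ | ⟨h1, h2⟩
      · exact h1
      · exact absurd hij (fun hh => asym i (le_of_lt (lt_of_lt_of_le (lt_trans hik h) hjn)) j hjn hh h2)
      · exact h2
  -- (e) for j+1 ≤ i < k ≤ n : L i k
  have he : ∀ i k, j + 1 ≤ i → i < k → k ≤ n → L i k := by
    intro i k hi hik hkn
    rcases eq_or_lt_of_le hi with h | h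
    · rw [← h]; exact (hb k (h ▸ hik) hkn).1
    · rcases hcyc (j + 1) i k h hik hkn with ⟨h1, h2⟩ | ⟨h1, h2⟩ | ⟨h1, h2⟩
      · exact h2
      · exact h1
      · exact absurd (hb k (lt_trans h hik) hkn).1
          (fun hh => asym k hkn (j + 1) hj h1 hh)
  intro p hp q hq hlt
  by_cases h1 : j + 1 ≤ p <;> by_cases h2 : j + 1 ≤ q <;>
    simp only [h1, h2, if_pos, if_neg, if_true, if_false] at hlt
  · exact he p q h1 (by omega) hq
  · exact hc q (by omega) p (by omega) hp
  · omega
  · exact hd p q (by omega) (by omega)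
end
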